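/- Let M : A ⥤ Type be a functor and a an object of A. Then the set of functors L : Under a ⥤ El(M) satisfying L ⋙ π_M = Under.forget a is in bijection with the set M.obj a; the bijection sends a lift L to the element of M.obj a carried by the image under L of the object 𝟙_a of Under a. -/

import Mathlib

open CategoryTheory

private lemma eqToHom_apply_type {X Y : Type w} (p : X = Y) (x : X) :
    CategoryTheory.eqToHom p x = cast p x := by subst p; rfl

/-- Lifts of the forgetful functor `Under a ⥤ A` along the projection from the
category of elements of `M : A ⥤ Type` are in bijection with `M.obj a`, the
bijection carrying a lift `L` to the element carried by the image under `L` of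
the object `𝟙 a` of `Under a`. -/
theorem lifts_of_coslice_equiv_fiber {A : Type*} [Category A]
    (M : A ⥤ Type*) (a : A) :
    ∃ e : {L : Under a ⥤ M.Elements // L ⋙ CategoryOfElements.π M = Under.forget a}
        ≃ M.obj a,
      ∀ (L : {L : Under a ⥤ M.Elements // L ⋙ CategoryOfElements.π M = Under.forget a}),
        e L = cast (congrArg M.obj (Functor.congr_obj L.2 (Under.mk (𝟙 a))))
          (L.1.obj (Under.mk (𝟙 a))).2 := by
  refine ⟨{
    toFun := fun L => cast (congrArg M.obj (Functor.congr_obj L.2 (Under.mk (𝟙 a))))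
      (L.1.obj (Under.mk (𝟙 a))).2
    invFun := fun m => ⟨{
      obj := fun u => ⟨u.right, M.map u.hom m⟩
      map := fun {u v} g => ⟨g.right, by
        dsimp
        rw [← FunctorToTypes.map_comp_apply, Under.w]⟩
      map_id := fun u => by apply CategoryOfElements.ext; rfl
      map_comp := fun f g => by apply CategoryOfElements.ext; rfl }, rfl⟩
    left_inv := fun L => ?_
    right_inv := fun m => by simp; exact cast_eq _ m
  }, fun L => rfl⟩
  obtain ⟨L, hL⟩ := L
  apply Subtype.ext
  dsimp
  set m := cast (congrArg M.obj (Functor.congr_obj hL (Under.mk (𝟙 a))))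
      (L.obj (Under.mk (𝟙 a))).2 with hm
  have hobj : ∀ u : Under a, (⟨u.right, M.map u.hom m⟩ : M.Elements) = L.obj u := by
    intro u
    have hu : (L.obj u).1 = u.right := Functor.congr_obj hL u
    have h0 : (L.obj (Under.mk (𝟙 a))).1 = a := Functor.congr_obj hL (Under.mk (𝟙 a))
    let e0 : Under.mk (𝟙 a) ⟶ u := Under.homMk u.hom (by simp)
    have hsnd := CategoryOfElements.map_snd (L.map e0)
    have hval : (L.map e0).val = eqToHom h0 ≫ u.hom ≫ eqToHom hu.symm :=
      Functor.congr_hom hL e0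
    refine (Functor.Elements.ext _ _ hu ?_).symm
    rw [← hsnd, hval]
    simp only [hm, eqToHom_map, FunctorToTypes.map_comp_apply]
    simp only [eqToHom_apply_type, cast_cast]
    apply eq_of_heq
    refine (cast_heq _ _).trans ?_
    congr 1
  refine CategoryTheory.Functor.ext hobj ?_
  intro u v g
  apply CategoryOfElements.ext
  rw [CategoryOfElements.comp_val, CategoryOfElements.comp_val]
  have h1 := eqToHom_map (CategoryOfElements.π M) (hobj u)
  have h2 := eqToHom_map (CategoryOfElements.π M) (hobj v).symm
  change g.right = _
  have h3 : (L.map g).val = eqToHom (Functor.congr_obj hL u) ≫ g.right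
      ≫ eqToHom (Functor.congr_obj hL v).symm := Functor.congr_hom hL g
  show g.right = (CategoryOfElements.π M).map (eqToHom (hobj u)) ≫ (L.map g).val
    ≫ (CategoryOfElements.π M).map (eqToHom (hobj v).symm)
  rw [h1, h2, h3]
  erw [Category.assoc, Category.assoc, eqToHom_trans_assoc, eqToHom_trans, eqToHom_refl, Category.id_comp, eqToHom_refl, Category.comp_id]
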